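/- Suppose the optimal fractional budgeted matching OPT is partitioned as OPT = OPT⁺ ∪ OPT⁻, where OPT⁺ contains the edges with buck-per-bang b(e) > γ_B and OPT⁻ those with b(e) ≤ γ_B, and suppose the budget constraint Σ_{e∈OPT} x(ℓ)c_ℓ ≤ B holds and the Threshold algorithm's matching M satisfies γ_B·u(M) = B (tight budget). Then u(OPT⁺) < u(M). Consequently, combined with u(M) ≥ u(OPT⁻)/2, one gets u(OPT) ≤ 3·u(M). -/

import Mathlib

variable {L R : Type*} [DecidableEq L] [DecidableEq R]

/-- Splitting the optimal fractional budgeted matching `OPT = OPT⁺ ∪ OPT⁻` by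
buck-per-bang relative to `γ_B`: under the budget constraint and a tight budget
`γ_B · u(M) = B` for the Threshold matching `M`, one has `u(OPT⁺) < u(M)`;
combined with `u(M) ≥ u(OPT⁻)/2` this gives `u(OPT) ≤ 3·u(M)`. -/
theorem opt_split_bound (OPTp OPTm : Finset (L × R)) (hdisj : Disjoint OPTp OPTm)
    (u : L × R → ℝ) (c : L → ℝ) (x : L → ℝ)
    (hu : ∀ e ∈ OPTp ∪ OPTm, 0 < u e) (hc : ∀ ℓ : L, 0 ≤ c ℓ)
    (hx0 : ∀ ℓ : L, 0 ≤ x ℓ) (hx1 : ∀ ℓ : L, x ℓ ≤ 1)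
    (B γB uM : ℝ) (hB : 0 < B) (hγ : 0 < γB)
    (hOPTp : ∀ e ∈ OPTp, c e.1 / u e > γB) (hOPTm : ∀ e ∈ OPTm, c e.1 / u e ≤ γB)
    (hbudget : ∑ e ∈ OPTp ∪ OPTm, x e.1 * c e.1 ≤ B)
    (htight : γB * uM = B)
    (hgreedy : uM ≥ (∑ e ∈ OPTm, x e.1 * u e) / 2) :
    (∑ e ∈ OPTp, x e.1 * u e) < uM ∧
    (∑ e ∈ OPTp ∪ OPTm, x e.1 * u e) ≤ 3 * uM := by
  have huM : 0 < uM := by nlinarith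
  have hpc : ∑ e ∈ OPTp, x e.1 * c e.1 ≤ B := by
    refine le_trans ?_ hbudget
    apply Finset.sum_le_sum_of_subset_of_nonneg Finset.subset_union_left
    intro e _ _; exact mul_nonneg (hx0 _) (hc _)
  have hterm : ∀ e ∈ OPTp, γB * (x e.1 * u e) ≤ x e.1 * c e.1 := by
    intro e he
    have hue := hu e (Finset.mem_union_left _ he)
    have := hOPTp e he
    have hcu : γB * u e < c e.1 := (lt_div_iff₀ hue).mp this
    nlinarith [hx0 e.1]
  have hS : ∀ e ∈ OPTp, 0 ≤ x e.1 * u e := fun e he =>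
    mul_nonneg (hx0 _) (le_of_lt (hu e (Finset.mem_union_left _ he)))
  have key : (∑ e ∈ OPTp, x e.1 * u e) < uM := by
    rcases eq_or_lt_of_le (Finset.sum_nonneg hS) with h0 | hpos
    · rw [← h0]; exact huM
    · obtain ⟨e, he, hep⟩ : ∃ e ∈ OPTp, 0 < x e.1 * u e := by
        by_contra h; push_neg at h
        have : ∑ e ∈ OPTp, x e.1 * u e ≤ 0 := Finset.sum_nonpos fun e he => h e he
        linarith
      have hstrict : γB * (x e.1 * u e) < x e.1 * c e.1 := by
        have hue := hu e (Finset.mem_union_left _ he)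
        have hcu : γB * u e < c e.1 := (lt_div_iff₀ hue).mp (hOPTp e he)
        have hxpos : 0 < x e.1 := by
          rcases (hx0 e.1).lt_or_eq with h | h
          · exact h
          · exfalso; rw [← h] at hep; simp at hep
        nlinarith
      have : γB * ∑ e ∈ OPTp, x e.1 * u e < ∑ e ∈ OPTp, x e.1 * c e.1 := by
        rw [Finset.mul_sum]
        exact Finset.sum_lt_sum hterm ⟨e, he, hstrict⟩
      nlinarith
  refine ⟨key, ?_⟩
  rw [Finset.sum_union hdisj]
  nlinarith
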